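/- For every even positive integer m, the set {1, 2, ..., m} can be partitioned into m/2 pairs each summing to m+1, and each pair either consists of two elements congruent to each other modulo 3, or of two elements in the two residue classes modulo 3 distinct from a, where 2a ≡ m+1 (mod 3). -/

import Mathlib

theorem stmt_4 (m : ℕ) (hm : 0 < m) (he : Even m) (a : ℕ) (ha : 2 * a % 3 = (m + 1) % 3) :
    ∃ P : Finset (Finset ℕ), P.card = m / 2 ∧
      (P : Set (Finset ℕ)).PairwiseDisjoint id ∧
      P.sup id = Finset.Icc 1 m ∧
      ∀ p ∈ P, p.card = 2 ∧ (∑ x ∈ p, x) = m + 1 ∧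
        ((∀ x ∈ p, ∀ y ∈ p, x % 3 = y % 3) ∨
          ((∀ x ∈ p, x % 3 ≠ a % 3) ∧ ∃ x ∈ p, ∃ y ∈ p, x % 3 ≠ y % 3)) := by
  obtain ⟨k, hk⟩ := he
  have hk2 : m = 2 * k := by omega
  refine ⟨(Finset.Icc 1 k).image (fun i => ({i, m + 1 - i} : Finset ℕ)), ?_, ?_, ?_, ?_⟩
  · rw [Finset.card_image_of_injOn]
    · simp; omega
    · intro i hi j hj hij
      simp only [Finset.coe_Icc, Set.mem_Icc] at hi hj
      have hij' : ({i, m + 1 - i} : Finset ℕ) = {j, m + 1 - j} := hij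
      have : i ∈ ({j, m + 1 - j} : Finset ℕ) := by rw [← hij']; simp
      simp at this
      omega
  · intro p hp q hq hpq
    simp only [Finset.coe_image, Set.mem_image, Finset.coe_Icc, Set.mem_Icc] at hp hq
    obtain ⟨i, hi, rfl⟩ := hp
    obtain ⟨j, hj, rfl⟩ := hq
    simp only [Function.onFun, id]
    rw [Finset.disjoint_left]
    intro x hx hx'
    simp at hx hx'
    apply hpq
    have : i = j := by omega
    subst this; rfl
  · ext x
    simp only [Finset.mem_sup, Finset.mem_image, Finset.mem_Icc, id]
    constructor
    · rintro ⟨p, ⟨i, hi, rfl⟩, hx⟩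
      simp at hx
      omega
    · intro hx
      rcases le_or_gt x k with h | h
      · exact ⟨{x, m + 1 - x}, ⟨x, by omega, rfl⟩, by simp⟩
      · refine ⟨{m + 1 - x, m + 1 - (m + 1 - x)}, ⟨m + 1 - x, by omega, rfl⟩, ?_⟩
        simp; omega
  · intro p hp
    simp only [Finset.mem_image, Finset.mem_Icc] at hp
    obtain ⟨i, hi, rfl⟩ := hp
    have hne : i ≠ m + 1 - i := by omega
    refine ⟨?_, ?_, ?_⟩
    · rw [Finset.card_insert_of_notMem (by simp [hne]), Finset.card_singleton]
    · rw [Finset.sum_insert (by simp [hne]), Finset.sum_singleton]; omega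
    · by_cases h : i % 3 = (m + 1 - i) % 3
      · left
        intro x hx y hy
        simp at hx hy
        rcases hx with rfl | rfl <;> rcases hy with rfl | rfl <;> omega
      · right
        refine ⟨?_, i, by simp, m + 1 - i, by simp, h⟩
        intro x hx
        simp at hx
        rcases hx with rfl | rfl <;> omega
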